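/- For all integers n ≥ 0 and 0 ≤ k ≤ n with n ≥ 1, C(n, k) ≤ (2^n / √(π n / 2)) · exp(-(2/n)·(k - n/2)² + 23/(18n)). -/

import Mathlib

set_option maxHeartbeats 1000000

lemma certE (x : ℝ) (hx : 0 ≤ x) (hx2 : x ≤ 2/3) :
    (x^2/2+x^4/4+x^6/6+x^8/8)^2 ≤ 43/9*(x^4/12+x^6/30+x^8/56-5/72*x^9) := by
  have hu : (0:ℝ) ≤ x := by linarith
  have hv : (0:ℝ) ≤ 2/3 - x := by linarith
  nlinarith [mul_nonneg (pow_nonneg hx 4) (pow_nonneg hv 12),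
    mul_nonneg (mul_nonneg (pow_nonneg hx 4) (pow_nonneg hu 1)) (pow_nonneg hv 11),
    mul_nonneg (mul_nonneg (pow_nonneg hx 4) (pow_nonneg hu 2)) (pow_nonneg hv 10),
    mul_nonneg (mul_nonneg (pow_nonneg hx 4) (pow_nonneg hu 3)) (pow_nonneg hv 9),
    mul_nonneg (mul_nonneg (pow_nonneg hx 4) (pow_nonneg hu 4)) (pow_nonneg hv 8),
    mul_nonneg (mul_nonneg (pow_nonneg hx 4) (pow_nonneg hu 5)) (pow_nonneg hv 7),
    mul_nonneg (mul_nonneg (pow_nonneg hx 4) (pow_nonneg hu 6)) (pow_nonneg hv 6),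
    mul_nonneg (mul_nonneg (pow_nonneg hx 4) (pow_nonneg hu 7)) (pow_nonneg hv 5),
    mul_nonneg (mul_nonneg (pow_nonneg hx 4) (pow_nonneg hu 8)) (pow_nonneg hv 4),
    mul_nonneg (mul_nonneg (pow_nonneg hx 4) (pow_nonneg hu 9)) (pow_nonneg hv 3),
    mul_nonneg (mul_nonneg (pow_nonneg hx 4) (pow_nonneg hu 10)) (pow_nonneg hv 2),
    mul_nonneg (mul_nonneg (pow_nonneg hx 4) (pow_nonneg hu 11)) (pow_nonneg hv 1),
    mul_nonneg (pow_nonneg hx 4) (pow_nonneg hu 12)]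

lemma certU (x : ℝ) (hx : 2/3 ≤ x) (hx1 : x ≤ 1) :
    0 ≤ 16*(x^4/12+x^6/30+x^8/56-5/72*x^9) - 4*(x^2/2+x^4/4+x^6/6+x^8/8)*(1-x) + 43/36*(1-x)^2 := by
  have hu : (0:ℝ) ≤ x - 2/3 := by linarith
  have hv : (0:ℝ) ≤ 1 - x := by linarith
  nlinarith [pow_nonneg hv 9,
    mul_nonneg (pow_nonneg hu 1) (pow_nonneg hv 8),
    mul_nonneg (pow_nonneg hu 2) (pow_nonneg hv 7),
    mul_nonneg (pow_nonneg hu 3) (pow_nonneg hv 6),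
    mul_nonneg (pow_nonneg hu 4) (pow_nonneg hv 5),
    mul_nonneg (pow_nonneg hu 5) (pow_nonneg hv 4),
    mul_nonneg (pow_nonneg hu 6) (pow_nonneg hv 3),
    mul_nonneg (pow_nonneg hu 7) (pow_nonneg hv 2),
    mul_nonneg (pow_nonneg hu 8) (pow_nonneg hv 1),
    pow_nonneg hu 9]

lemma certV (x : ℝ) (hx : 2/3 ≤ x) (hx1 : x ≤ 1) :
    0 ≤ 8*(x^4/12+x^6/30+x^8/56-5/72*x^9) - (1-x)*(x^2/2+x^4/4+x^6/6+x^8/8) := by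
  have hu : (0:ℝ) ≤ x - 2/3 := by linarith
  have hv : (0:ℝ) ≤ 1 - x := by linarith
  nlinarith [pow_nonneg hv 9,
    mul_nonneg (pow_nonneg hu 1) (pow_nonneg hv 8),
    mul_nonneg (pow_nonneg hu 2) (pow_nonneg hv 7),
    mul_nonneg (pow_nonneg hu 3) (pow_nonneg hv 6),
    mul_nonneg (pow_nonneg hu 4) (pow_nonneg hv 5),
    mul_nonneg (pow_nonneg hu 5) (pow_nonneg hv 4),
    mul_nonneg (pow_nonneg hu 6) (pow_nonneg hv 3),
    mul_nonneg (pow_nonneg hu 7) (pow_nonneg hv 2),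
    mul_nonneg (pow_nonneg hu 8) (pow_nonneg hv 1),
    pow_nonneg hu 9]

open Real

/-- Taylor lower bound for log(1+x), even truncation. -/
lemma log_one_add_ge (x : ℝ) (hx : 0 ≤ x) :
    x - x^2/2 + x^3/3 - x^4/4 + x^5/5 - x^6/6 + x^7/7 - x^8/8 ≤ Real.log (1+x) := by
  set f : ℝ → ℝ := fun t => Real.log (1+t) - (t - t^2/2 + t^3/3 - t^4/4 + t^5/5 - t^6/6 + t^7/7 - t^8/8) with hf
  have hder : ∀ t : ℝ, 0 ≤ t → HasDerivAt f (t^8/(1+t)) t := by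
    intro t ht
    have h1 : (0:ℝ) < 1 + t := by linarith
    have hlog : HasDerivAt (fun t : ℝ => Real.log (1+t)) (1/(1+t)) t := by
      have : HasDerivAt (fun t : ℝ => 1 + t) 1 t := by
        simpa using (hasDerivAt_id t).const_add 1
      simpa using this.log h1.ne'
    have hpoly : HasDerivAt (fun t : ℝ => t - t^2/2 + t^3/3 - t^4/4 + t^5/5 - t^6/6 + t^7/7 - t^8/8)
        (1 - t + t^2 - t^3 + t^4 - t^5 + t^6 - t^7) t := by
      have h := (((((((hasDerivAt_id t).sub ((hasDerivAt_pow 2 t).div_const 2)).add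
        ((hasDerivAt_pow 3 t).div_const 3)).sub ((hasDerivAt_pow 4 t).div_const 4)).add
        ((hasDerivAt_pow 5 t).div_const 5)).sub ((hasDerivAt_pow 6 t).div_const 6)).add
        ((hasDerivAt_pow 7 t).div_const 7)).sub ((hasDerivAt_pow 8 t).div_const 8)
      refine h.congr_deriv ?_
      norm_num
    have := hlog.sub hpoly
    refine this.congr_deriv ?_
    field_simp
    ring
  have hmono : MonotoneOn f (Set.Ici (0:ℝ)) := by
    apply monotoneOn_of_deriv_nonneg (convex_Ici 0)
    · intro t ht
      exact ((hder t ht).differentiableAt).continuousAt.continuousWithinAt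
    · intro t ht
      rw [interior_Ici] at ht
      exact ((hder t (le_of_lt ht)).differentiableAt).differentiableWithinAt
    · intro t ht
      rw [interior_Ici] at ht
      rw [(hder t (le_of_lt ht)).deriv]
      have ht0 : (0:ℝ) < t := Set.mem_Ioi.mp ht
      exact div_nonneg (pow_nonneg ht0.le 8) (by linarith)
  have h0 : f 0 = 0 := by simp [hf]
  have := hmono (Set.self_mem_Ici) (Set.mem_Ici.mpr hx) hx
  rw [h0] at this
  simpa [hf] using this

/-- Taylor lower bound for log(1-x) with tail term. -/
lemma log_one_sub_ge (x : ℝ) (hx : 0 ≤ x) (hx1 : x < 1) :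
    -(x + x^2/2 + x^3/3 + x^4/4 + x^5/5 + x^6/6 + x^7/7 + x^8/8) - x^9/(9*(1-x)) ≤ Real.log (1-x) := by
  set f : ℝ → ℝ := fun t => Real.log (1-t) + (t + t^2/2 + t^3/3 + t^4/4 + t^5/5 + t^6/6 + t^7/7 + t^8/8) + t^9/(9*(1-t)) with hf
  have hder : ∀ t : ℝ, 0 ≤ t → t < 1 → HasDerivAt f (t^9/(9*(1-t)^2)) t := by
    intro t ht ht1
    have h1 : (0:ℝ) < 1 - t := by linarith
    have hlog : HasDerivAt (fun t : ℝ => Real.log (1-t)) (-(1/(1-t))) t := by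
      have h2 : HasDerivAt (fun t : ℝ => 1 - t) (-1) t := by
        simpa using (hasDerivAt_id t).const_sub 1
      have := h2.log h1.ne'
      convert this using 1
      field_simp
    have hpoly : HasDerivAt (fun t : ℝ => t + t^2/2 + t^3/3 + t^4/4 + t^5/5 + t^6/6 + t^7/7 + t^8/8)
        (1 + t + t^2 + t^3 + t^4 + t^5 + t^6 + t^7) t := by
      have h := (((((((hasDerivAt_id t).add ((hasDerivAt_pow 2 t).div_const 2)).add
        ((hasDerivAt_pow 3 t).div_const 3)).add ((hasDerivAt_pow 4 t).div_const 4)).add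
        ((hasDerivAt_pow 5 t).div_const 5)).add ((hasDerivAt_pow 6 t).div_const 6)).add
        ((hasDerivAt_pow 7 t).div_const 7)).add ((hasDerivAt_pow 8 t).div_const 8)
      refine h.congr_deriv ?_
      norm_num
    have hden : HasDerivAt (fun t : ℝ => 9*(1-t)) (-9) t := by
      have h2 : HasDerivAt (fun t : ℝ => 1 - t) (-1) t := by
        simpa using (hasDerivAt_id t).const_sub 1
      refine (h2.const_mul 9).congr_deriv ?_
      ring
    have hfrac : HasDerivAt (fun t : ℝ => t^9/(9*(1-t)))
        ((9*t^8*(9*(1-t)) - t^9*(-9))/(9*(1-t))^2) t :=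
      (hasDerivAt_pow 9 t).div hden (by positivity)
    have := (hlog.add hpoly).add hfrac
    refine this.congr_deriv ?_
    field_simp
    ring
  rcases eq_or_lt_of_le hx with h | hxpos
  · simp [hf, ← h]
  have hmono : MonotoneOn f (Set.Icc (0:ℝ) x) := by
    apply monotoneOn_of_deriv_nonneg (convex_Icc 0 x)
    · intro t ht
      exact ((hder t ht.1 (lt_of_le_of_lt ht.2 hx1)).differentiableAt).continuousAt.continuousWithinAt
    · intro t ht
      rw [interior_Icc] at ht
      exact ((hder t ht.1.le (lt_trans ht.2 hx1)).differentiableAt).differentiableWithinAt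
    · intro t ht
      rw [interior_Icc] at ht
      rw [(hder t ht.1.le (lt_trans ht.2 hx1)).deriv]
      exact div_nonneg (pow_nonneg ht.1.le 9) (by positivity)
  have h0 : f 0 = 0 := by simp [hf]
  have := hmono (Set.mem_Icc.mpr ⟨le_refl 0, hx⟩) (Set.mem_Icc.mpr ⟨hx, le_refl x⟩) hx
  rw [h0] at this
  have hfx : f x = Real.log (1-x) + (x + x^2/2 + x^3/3 + x^4/4 + x^5/5 + x^6/6 + x^7/7 + x^8/8) + x^9/(9*(1-x)) := rfl
  linarith [this.trans_eq hfx]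

open Real Filter Stirling Finset

lemma sqrt_pi_le_stirlingSeq (m : ℕ) : Real.sqrt π ≤ stirlingSeq (m+1) := by
  have h : Filter.Tendsto (fun n : ℕ => stirlingSeq (n+1)) atTop (nhds (Real.sqrt π)) :=
    tendsto_stirlingSeq_sqrt_pi.comp (Filter.tendsto_add_atTop_nat 1)
  exact Antitone.le_of_tendsto stirlingSeq'_antitone h m

lemma stirling_step (n : ℕ) :
    Real.log (stirlingSeq (n+1)) - Real.log (stirlingSeq (n+2)) ≤
      1/12 * (1/((n:ℝ)+1) - 1/((n:ℝ)+2)) := by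
  set q : ℝ := ((1:ℝ) / (2 * ((n:ℝ)+1) + 1)) ^ 2 with hq
  have hq0 : 0 ≤ q := sq_nonneg _
  have hnn : (0:ℝ) ≤ (n:ℝ) := Nat.cast_nonneg n
  have hq1 : q < 1 := by
    rw [hq, div_pow, one_pow]
    rw [div_lt_one (by positivity)]
    nlinarith
  have hgeo : HasSum (fun k : ℕ => (1:ℝ)/3 * q ^ (k+1)) (q/3 / (1-q)) := by
    have h := (hasSum_geometric_of_lt_one hq0 hq1).mul_left (q/3)
    have heq : ∀ k : ℕ, q/3 * q ^ k = (1:ℝ)/3 * q ^ (k+1) := by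
      intro k; rw [pow_succ]; ring
    simp_rw [heq] at h
    simpa [div_eq_mul_inv] using h
  have hsum := log_stirlingSeq_diff_hasSum n
  have hle : Real.log (stirlingSeq (n+1)) - Real.log (stirlingSeq (n+2)) ≤ q/3/(1-q) := by
    refine hasSum_le ?_ hsum hgeo
    intro k
    have hc : ((1:ℝ) / (2 * ((k:ℕ)+1 : ℕ) + 1)) ≤ 1/3 := by
      rw [div_le_div_iff₀ (by positivity) (by norm_num)]
      push_cast
      linarith [Nat.cast_nonneg (α := ℝ) k]
    have hqp : (0:ℝ) ≤ (((1:ℝ) / (2 * ((n:ℝ)+1) + 1)) ^ 2) ^ ((k:ℕ)+1) := by positivity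
    calc (1:ℝ) / (2 * ((k:ℕ)+1 : ℕ) + 1) * (((1:ℝ) / (2 * (((n:ℕ)+1 : ℕ):ℝ) + 1)) ^ 2) ^ ((k:ℕ)+1)
        ≤ 1/3 * (((1:ℝ) / (2 * (((n:ℕ)+1 : ℕ):ℝ) + 1)) ^ 2) ^ ((k:ℕ)+1) := by
          apply mul_le_mul_of_nonneg_right _ (by positivity)
          push_cast at hc ⊢
          convert hc using 2
      _ = 1/3 * q ^ (k+1) := by push_cast [hq]; norm_num
  refine hle.trans ?_
  have h2 : (0:ℝ) < 1 - q := by linarith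
  apply le_of_eq
  have hc : (0:ℝ) < 2*((n:ℝ)+1)+1 := by positivity
  have hc2 : ((2*((n:ℝ)+1)+1)^2 - 1) ≠ 0 := by nlinarith
  rw [hq]
  rw [show (1:ℝ) - (1/(2*((n:ℝ)+1)+1))^2 = ((2*((n:ℝ)+1)+1)^2 - 1)/(2*((n:ℝ)+1)+1)^2 by
    field_simp]
  field_simp
  ring

lemma stirling_chain (n m : ℕ) (h : n ≤ m) :
    Real.log (stirlingSeq (n+1)) ≤ Real.log (stirlingSeq (m+1)) +
      1/12 * (1/((n:ℝ)+1) - 1/((m:ℝ)+1)) := by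
  induction m, h using Nat.le_induction with
  | base => simp
  | succ m hm ih =>
      have hs := stirling_step m
      have e : m + 1 + 1 = m + 2 := rfl
      rw [e]
      push_cast at *
      have e2 : ((m:ℝ)+1+1) = (m:ℝ)+2 := by ring
      rw [e2]
      linarith

lemma log_stirling_upper (n : ℕ) :
    Real.log (stirlingSeq (n+1)) ≤ Real.log (Real.sqrt π) + 1/(12*((n:ℝ)+1)) := by
  have hlim : Filter.Tendsto
      (fun m : ℕ => Real.log (stirlingSeq (m+1)) + 1/12 * (1/((n:ℝ)+1) - 1/((m:ℝ)+1)))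
      atTop (nhds (Real.log (Real.sqrt π) + 1/12 * (1/((n:ℝ)+1) - 0))) := by
    apply Filter.Tendsto.add
    · have hc : ContinuousAt Real.log (Real.sqrt π) :=
        Real.continuousAt_log (by positivity)
      exact hc.tendsto.comp (tendsto_stirlingSeq_sqrt_pi.comp (Filter.tendsto_add_atTop_nat 1))
    · exact (tendsto_const_nhds.sub tendsto_one_div_add_atTop_nhds_zero_nat).const_mul _
  have hev : ∀ᶠ m in atTop, Real.log (stirlingSeq (n+1)) ≤
      Real.log (stirlingSeq (m+1)) + 1/12 * (1/((n:ℝ)+1) - 1/((m:ℝ)+1)) := by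
    filter_upwards [Filter.eventually_ge_atTop n] with m hm
    exact stirling_chain n m hm
  have := ge_of_tendsto hlim hev
  calc Real.log (stirlingSeq (n+1)) ≤ Real.log (Real.sqrt π) + 1/12 * (1/((n:ℝ)+1) - 0) := this
    _ = Real.log (Real.sqrt π) + 1/(12*((n:ℝ)+1)) := by
        have hn1 : ((n:ℝ)+1) ≠ 0 := by positivity
        field_simp
        ring

lemma Atil_nonneg (x : ℝ) (h0 : 0 ≤ x) (h1 : x ≤ 1) :
    0 ≤ x^4/12+x^6/30+x^8/56-5/72*x^9 := by
  have h9 : x^9 ≤ x^4 := pow_le_pow_of_le_one h0 h1 (by norm_num)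
  nlinarith [pow_nonneg h0 4, pow_nonneg h0 6, pow_nonneg h0 8]

lemma Mlemma (x N : ℝ) (hx0 : 0 ≤ x) (hx1 : x < 1) (hN : 4 ≤ N*(1-x)) :
    x^2/2+x^4/4+x^6/6+x^8/8 ≤ N*(x^4/12+x^6/30+x^8/56-5/72*x^9) + (43/36)/N := by
  have hw : 0 < 1 - x := by linarith
  have hNpos : 0 < N := by nlinarith
  have key : N*(x^4/12+x^6/30+x^8/56-5/72*x^9) + (43/36)/N - (x^2/2+x^4/4+x^6/6+x^8/8)
      = (N^2*(x^4/12+x^6/30+x^8/56-5/72*x^9) - N*(x^2/2+x^4/4+x^6/6+x^8/8) + 43/36)/N := by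
    field_simp
    ring
  rw [← sub_nonneg, key]
  apply div_nonneg _ hNpos.le
  have hA := Atil_nonneg x hx0 hx1.le
  by_cases hc : x ≤ 2/3
  · have hE := certE x hx0 hc
    by_cases hA0 : 0 < x^4/12+x^6/30+x^8/56-5/72*x^9
    · nlinarith [sq_nonneg (2*N*(x^4/12+x^6/30+x^8/56-5/72*x^9) - (x^2/2+x^4/4+x^6/6+x^8/8)),
        hE, hA0, hNpos]
    · have hA0' : x^4/12+x^6/30+x^8/56-5/72*x^9 = 0 := le_antisymm (not_lt.mp hA0) hA
      have h2 : (x^2/2+x^4/4+x^6/6+x^8/8)^2 = 0 := by nlinarith [sq_nonneg (x^2/2+x^4/4+x^6/6+x^8/8)]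
      have hPhi : x^2/2+x^4/4+x^6/6+x^8/8 = 0 := by
        exact pow_eq_zero_iff (two_ne_zero) |>.mp h2
      rw [hA0', hPhi]
      norm_num
  · push_neg at hc
    have hU := certU x hc.le hx1.le
    have hV := certV x hc.le hx1.le
    have hs : 0 ≤ N*(1-x) - 4 := by linarith
    have h1 : 0 ≤ (N^2*(x^4/12+x^6/30+x^8/56-5/72*x^9) - N*(x^2/2+x^4/4+x^6/6+x^8/8) + 43/36)*(1-x)^2 := by
      have hid : (N^2*(x^4/12+x^6/30+x^8/56-5/72*x^9) - N*(x^2/2+x^4/4+x^6/6+x^8/8) + 43/36)*(1-x)^2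
          = (16*(x^4/12+x^6/30+x^8/56-5/72*x^9) - 4*(x^2/2+x^4/4+x^6/6+x^8/8)*(1-x) + 43/36*(1-x)^2)
            + (N*(1-x)-4)*(8*(x^4/12+x^6/30+x^8/56-5/72*x^9) - (1-x)*(x^2/2+x^4/4+x^6/6+x^8/8))
            + (N*(1-x)-4)^2*(x^4/12+x^6/30+x^8/56-5/72*x^9) := by ring
      rw [hid]
      exact add_nonneg (add_nonneg hU (mul_nonneg hs hV)) (mul_nonneg (sq_nonneg _) hA)
    have hw2 : (0:ℝ) < (1-x)^2 := pow_pos hw 2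
    have h3 := div_nonneg h1 hw2.le
    rwa [mul_div_cancel_right₀ _ hw2.ne'] at h3

lemma star_nonneg (N K : ℝ) (hK : 2 ≤ K) (hKN : 2*K ≤ N) :
    0 ≤ (2*(N-K)+1)*Real.log (2*(N-K)/N) + (2*K+1)*Real.log (2*K/N)
      - (N-2*K)^2/N + 43/(18*N) := by
  have hNpos : (0:ℝ) < N := by linarith
  set x : ℝ := (N - 2*K)/N with hxdef
  have hx0 : 0 ≤ x := div_nonneg (by linarith) hNpos.le
  have hx1 : x < 1 := by
    rw [hxdef, div_lt_one hNpos]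
    linarith
  have h1mx : 1 - x = 2*K/N := by
    rw [hxdef]
    field_simp
    ring
  have h1px : 1 + x = 2*(N-K)/N := by
    rw [hxdef]
    field_simp
    ring
  have hNx1 : N*(1-x) = 2*K := by
    rw [h1mx]
    field_simp
  have hNx2 : N*(1+x) = 2*(N-K) := by
    rw [h1px]
    field_simp
  have hN4 : 4 ≤ N*(1-x) := by rw [hNx1]; linarith
  have hc1 : (2*(N-K)+1) = N*(1+x)+1 := by rw [hNx2]
  have hc2 : (2*K+1) = N*(1-x)+1 := by rw [hNx1]
  have hx2 : (N-2*K)^2/N = N*x^2 := by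
    rw [hxdef]
    field_simp
  rw [← h1px, ← h1mx, hc1, hc2, hx2]
  -- now goal : 0 ≤ (N*(1+x)+1)*log(1+x) + (N*(1-x)+1)*log(1-x) - N*x^2 + 43/(18*N)
  have hA := log_one_add_ge x hx0
  have hB := log_one_sub_ge x hx0 hx1
  have hcoef1 : 0 ≤ N*(1+x)+1 := by nlinarith
  have hcoef2 : 0 ≤ N*(1-x)+1 := by nlinarith
  have step1 := mul_le_mul_of_nonneg_left hA hcoef1
  have step2 := mul_le_mul_of_nonneg_left hB hcoef2
  have hw : 0 < 1 - x := by linarith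
  have hT : x^9/(9*(1-x)) ≤ N*x^9/36 := by
    rw [div_le_iff₀ (by positivity)]
    have h9 : (0:ℝ) ≤ x^9 := pow_nonneg hx0 9
    nlinarith [mul_le_mul_of_nonneg_right hN4 h9]
  have e1 : (N*(1-x)+1)*(-(x + x^2/2 + x^3/3 + x^4/4 + x^5/5 + x^6/6 + x^7/7 + x^8/8) - x^9/(9*(1-x)))
      = (N*(1-x)+1)*(-(x + x^2/2 + x^3/3 + x^4/4 + x^5/5 + x^6/6 + x^7/7 + x^8/8))
        - (N*(1-x)+1)*(x^9/(9*(1-x))) := by ring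
  have step3 : (N*(1-x)+1)*(x^9/(9*(1-x))) ≤ N*x^9/9 + N*x^9/36 := by
    have hxx : (N*(1-x))*(x^9/(9*(1-x))) = N*x^9/9 := by
      field_simp
    have hexp : (N*(1-x)+1)*(x^9/(9*(1-x))) = (N*(1-x))*(x^9/(9*(1-x))) + x^9/(9*(1-x)) := by ring
    rw [hexp, hxx]
    linarith [hT]
  have step4 := Mlemma x N hx0 hx1 hN4
  have hid : (N*(1+x)+1)*(x - x^2/2 + x^3/3 - x^4/4 + x^5/5 - x^6/6 + x^7/7 - x^8/8)
      + (N*(1-x)+1)*(-(x + x^2/2 + x^3/3 + x^4/4 + x^5/5 + x^6/6 + x^7/7 + x^8/8))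
      - (N*x^9/9 + N*x^9/36) - N*x^2 + 43/(18*N)
      = 2*(N*(x^4/12+x^6/30+x^8/56-5/72*x^9) + (43/36)/N - (x^2/2+x^4/4+x^6/6+x^8/8)) := by
    ring
  linarith [step1, step2, step3, step4, e1, hid]

lemma log_stirling_upper' (m : ℕ) (hm : 1 ≤ m) :
    Real.log (stirlingSeq m) ≤ Real.log (Real.sqrt π) + 1/(12*(m:ℝ)) := by
  obtain ⟨p, rfl⟩ : ∃ p, m = p + 1 := ⟨m-1, (Nat.succ_pred_eq_of_pos hm).symm⟩
  have := log_stirling_upper p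
  push_cast
  push_cast at this
  linarith

lemma sqrt_pi_le_stirlingSeq' (m : ℕ) (hm : 1 ≤ m) : Real.sqrt π ≤ stirlingSeq m := by
  obtain ⟨p, rfl⟩ : ∃ p, m = p + 1 := ⟨m-1, (Nat.succ_pred_eq_of_pos hm).symm⟩
  exact sqrt_pi_le_stirlingSeq p

lemma log_fact (m : ℕ) (hm : 1 ≤ m) :
    Real.log (m.factorial : ℝ) = Real.log (stirlingSeq m) + 1/2*Real.log (2*(m:ℝ))
      + (m:ℝ)*(Real.log (m:ℝ) - 1) := by
  have h := Stirling.log_stirlingSeq_formula m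
  have hm0 : ((m:ℝ)) ≠ 0 := by
    have : (0:ℝ) < m := by exact_mod_cast hm
    exact this.ne'
  have he : Real.log ((m:ℝ) / Real.exp 1) = Real.log (m:ℝ) - 1 := by
    rw [Real.log_div hm0 (Real.exp_ne_zero 1), Real.log_exp]
  rw [he] at h
  linarith

lemma core_log (n k : ℕ) (hk2 : 2 ≤ k) (hkn : 2*k ≤ n) :
    Real.log (n.choose k : ℝ) ≤ (n:ℝ)*Real.log 2 - Real.log (Real.sqrt (π*(n:ℝ)/2))
      + (-(2/(n:ℝ))*((k:ℝ)-(n:ℝ)/2)^2 + 23/(18*(n:ℝ))) := by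
  have hkn' : k ≤ n := by omega
  have hn1 : 1 ≤ n := by omega
  have hm1 : 1 ≤ n - k := by omega
  have hK2 : (2:ℝ) ≤ (k:ℝ) := by exact_mod_cast hk2
  have hKN : 2*(k:ℝ) ≤ (n:ℝ) := by exact_mod_cast hkn
  have hNpos : (0:ℝ) < (n:ℝ) := by linarith
  have hKpos : (0:ℝ) < (k:ℝ) := by linarith
  have hMpos : (0:ℝ) < (n:ℝ) - (k:ℝ) := by linarith
  have eM : ((n - k : ℕ):ℝ) = (n:ℝ) - (k:ℝ) := by
    push_cast [Nat.cast_sub hkn']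
    ring
  -- factorial identity
  have hfac : Real.log (n.choose k : ℝ)
      = Real.log (n.factorial : ℝ) - Real.log (k.factorial : ℝ) - Real.log ((n-k).factorial : ℝ) := by
    have h := Nat.choose_mul_factorial_mul_factorial hkn'
    have hcast : (n.choose k : ℝ) * (k.factorial : ℝ) * ((n-k).factorial : ℝ) = (n.factorial : ℝ) := by
      exact_mod_cast congrArg (Nat.cast : ℕ → ℝ) h
    have hC : ((n.choose k : ℕ):ℝ) ≠ 0 := by
      have := Nat.choose_pos hkn'
      positivity
    have hk0 : ((k.factorial : ℕ):ℝ) ≠ 0 := by positivity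
    have hm0 : (((n-k).factorial : ℕ):ℝ) ≠ 0 := by positivity
    rw [← hcast, Real.log_mul (mul_ne_zero hC hk0) hm0, Real.log_mul hC hk0]
    ring
  have Fn := log_fact n hn1
  have Fk := log_fact k (by omega)
  have Fm := log_fact (n-k) hm1
  rw [eM] at Fm
  have hsn := log_stirling_upper' n hn1
  have hsk := Real.log_le_log (Real.sqrt_pos.mpr Real.pi_pos) (sqrt_pi_le_stirlingSeq' k (by omega))
  have hsm := Real.log_le_log (Real.sqrt_pos.mpr Real.pi_pos) (sqrt_pi_le_stirlingSeq' (n-k) hm1)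
  have star := star_nonneg (n:ℝ) (k:ℝ) hK2 hKN
  -- expansions
  have e4 : Real.log (Real.sqrt π) = Real.log π/2 := Real.log_sqrt Real.pi_pos.le
  rw [e4] at hsn hsk hsm
  have e1 : Real.log (2*((n:ℝ)-(k:ℝ))/(n:ℝ))
      = Real.log 2 + Real.log ((n:ℝ)-(k:ℝ)) - Real.log (n:ℝ) := by
    rw [Real.log_div (by positivity) hNpos.ne', Real.log_mul two_ne_zero hMpos.ne']
  have e2 : Real.log (2*(k:ℝ)/(n:ℝ)) = Real.log 2 + Real.log (k:ℝ) - Real.log (n:ℝ) := by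
    rw [Real.log_div (by positivity) hNpos.ne', Real.log_mul two_ne_zero hKpos.ne']
  rw [e1, e2] at star
  have e3 : Real.log (Real.sqrt (π*(n:ℝ)/2))
      = (Real.log π + Real.log (n:ℝ) - Real.log 2)/2 := by
    rw [Real.log_sqrt (by positivity), Real.log_div (by positivity) two_ne_zero,
      Real.log_mul Real.pi_pos.ne' hNpos.ne']
  have e5 : Real.log (2*(n:ℝ)) = Real.log 2 + Real.log (n:ℝ) :=
    Real.log_mul two_ne_zero hNpos.ne'
  have e6 : Real.log (2*(k:ℝ)) = Real.log 2 + Real.log (k:ℝ) :=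
    Real.log_mul two_ne_zero hKpos.ne'
  have e7 : Real.log (2*((n:ℝ)-(k:ℝ))) = Real.log 2 + Real.log ((n:ℝ)-(k:ℝ)) :=
    Real.log_mul two_ne_zero hMpos.ne'
  rw [e5] at Fn
  rw [e6] at Fk
  rw [e7] at Fm
  rw [e3, hfac, Fn, Fk, Fm]
  -- the final linear-arithmetic step
  have hinv : (n:ℝ) * (1/(n:ℝ)) = 1 := mul_one_div_cancel hNpos.ne'
  have q1 : 1/(12*(n:ℝ)) = (1/12)*(1/(n:ℝ)) := by ring
  have q2 : 43/(18*(n:ℝ)) = (43/18)*(1/(n:ℝ)) := by ring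
  have q3 : 23/(18*(n:ℝ)) = (23/18)*(1/(n:ℝ)) := by ring
  have q4 : ((n:ℝ)-2*(k:ℝ))^2/(n:ℝ) = 4*(((k:ℝ) - (n:ℝ)/2)^2*(1/(n:ℝ))) := by ring
  have q5 : -(2/(n:ℝ))*(((k:ℝ)-(n:ℝ)/2))^2 = -2*(((k:ℝ) - (n:ℝ)/2)^2*(1/(n:ℝ))) := by ring
  rw [q1] at hsn
  rw [q4, q2] at star
  rw [q5, q3]
  linarith [hsn, hsk, hsm, star]


lemma log_pi_bound : Real.log π ≤ 1.1589 := by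
  have h1 : Real.log (π / Real.exp 1) ≤ π / Real.exp 1 - 1 :=
    Real.log_le_sub_one_of_pos (by positivity)
  have h2 : Real.log (π / Real.exp 1) = Real.log π - 1 := by
    rw [Real.log_div Real.pi_pos.ne' (Real.exp_ne_zero 1), Real.log_exp]
  have h3 : π / Real.exp 1 ≤ 3.15 / 2.7182818283 := by
    apply div_le_div₀ (by norm_num) Real.pi_lt_d2.le (by positivity) Real.exp_one_gt_d9.le
  have h4 : (3.15:ℝ) / 2.7182818283 ≤ 1.1589 := by norm_num
  linarith

lemma log_n_bound (N : ℝ) (hN : 0 < N) : Real.log N ≤ N/8 - 1 + 3*Real.log 2 := by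
  have h1 : Real.log (N / 8) ≤ N/8 - 1 := Real.log_le_sub_one_of_pos (by positivity)
  have h2 : Real.log (N / 8) = Real.log N - 3*Real.log 2 := by
    rw [Real.log_div hN.ne' (by norm_num), show (8:ℝ) = 2^3 by norm_num, Real.log_pow]
    push_cast
    ring
  linarith

lemma zero_log (n : ℕ) (hn : 1 ≤ n) :
    0 ≤ (n:ℝ)*Real.log 2 - Real.log (Real.sqrt (π*(n:ℝ)/2))
      + (-(2/(n:ℝ))*((n:ℝ)/2)^2 + 23/(18*(n:ℝ))) := by
  have hN : (0:ℝ) < (n:ℝ) := by exact_mod_cast hn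
  have hN1 : (1:ℝ) ≤ (n:ℝ) := by exact_mod_cast hn
  have e3 : Real.log (Real.sqrt (π*(n:ℝ)/2))
      = (Real.log π + Real.log (n:ℝ) - Real.log 2)/2 := by
    rw [Real.log_sqrt (by positivity), Real.log_div (by positivity) two_ne_zero,
      Real.log_mul Real.pi_pos.ne' hN.ne']
  rw [e3]
  have hlogn := log_n_bound (n:ℝ) hN
  have hpi := log_pi_bound
  have hl2a := Real.log_two_gt_d9
  have hl2b := Real.log_two_lt_d9
  have key : 0 ≤ (n:ℝ)*((n:ℝ)*Real.log 2 - (Real.log π + Real.log (n:ℝ) - Real.log 2)/2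
      - (n:ℝ)/2) + 23/18 := by
    nlinarith [sq_nonneg ((n:ℝ) - 3),
      mul_nonneg hN.le (by linarith : 0 ≤ (n:ℝ)/8 - 1 + 3*Real.log 2 - Real.log (n:ℝ)),
      mul_nonneg (mul_nonneg hN.le hN.le) (by linarith : (0:ℝ) ≤ Real.log 2 - 0.6931471803),
      mul_nonneg hN.le (by linarith : (0:ℝ) ≤ Real.log 2 - 0.6931471803)]
  have expand : (n:ℝ)*Real.log 2 - (Real.log π + Real.log (n:ℝ) - Real.log 2)/2
      + (-(2/(n:ℝ))*((n:ℝ)/2)^2 + 23/(18*(n:ℝ)))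
      = ((n:ℝ)*((n:ℝ)*Real.log 2 - (Real.log π + Real.log (n:ℝ) - Real.log 2)/2
        - (n:ℝ)/2) + 23/18)/(n:ℝ) := by
    field_simp
    ring
  rw [expand]
  positivity

lemma one_log (n : ℕ) (hn : 5 ≤ n) :
    Real.log (n:ℝ) ≤ (n:ℝ)*Real.log 2 - Real.log (Real.sqrt (π*(n:ℝ)/2))
      + (-(2/(n:ℝ))*((1:ℝ)-(n:ℝ)/2)^2 + 23/(18*(n:ℝ))) := by
  have hN : (0:ℝ) < (n:ℝ) := by positivity
  have hN5 : (5:ℝ) ≤ (n:ℝ) := by exact_mod_cast hn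
  have e3 : Real.log (Real.sqrt (π*(n:ℝ)/2))
      = (Real.log π + Real.log (n:ℝ) - Real.log 2)/2 := by
    rw [Real.log_sqrt (by positivity), Real.log_div (by positivity) two_ne_zero,
      Real.log_mul Real.pi_pos.ne' (by positivity)]
  rw [e3]
  have hlogn := log_n_bound (n:ℝ) hN
  have hpi := log_pi_bound
  have hl2a := Real.log_two_gt_d9
  have hl2b := Real.log_two_lt_d9
  have key : 0 ≤ (n:ℝ)*((n:ℝ)*Real.log 2 - (Real.log π + Real.log (n:ℝ) - Real.log 2)/2
      - Real.log (n:ℝ) - (n:ℝ)/2 + 2) - 2 + 23/18 := by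
    nlinarith [mul_nonneg (by positivity : (0:ℝ) ≤ (3/2)*(n:ℝ))
        (by linarith : 0 ≤ (n:ℝ)/8 - 1 + 3*Real.log 2 - Real.log (n:ℝ)),
      mul_nonneg (mul_nonneg hN.le hN.le) (by linarith : (0:ℝ) ≤ Real.log 2 - 0.6931471803),
      mul_nonneg hN.le (by linarith : (0:ℝ) ≤ Real.log 2 - 0.6931471803),
      mul_nonneg (by linarith : (0:ℝ) ≤ (n:ℝ) - 5) (by linarith : (0:ℝ) ≤ (n:ℝ) - 5)]
  have expand : (n:ℝ)*Real.log 2 - (Real.log π + Real.log (n:ℝ) - Real.log 2)/2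
      + (-(2/(n:ℝ))*((1:ℝ)-(n:ℝ)/2)^2 + 23/(18*(n:ℝ))) - Real.log (n:ℝ)
      = ((n:ℝ)*((n:ℝ)*Real.log 2 - (Real.log π + Real.log (n:ℝ) - Real.log 2)/2
        - Real.log (n:ℝ) - (n:ℝ)/2 + 2) - 2 + 23/18)/(n:ℝ) := by
    field_simp
    ring
  have h := div_nonneg key hN.le
  rw [← expand] at h
  linarith


lemma rhs_pos (n : ℕ) (hn : 1 ≤ n) (E : ℝ) :
    (0:ℝ) < 2^n / Real.sqrt (π*(n:ℝ)/2) * Real.exp E := by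
  have hN : (0:ℝ) < (n:ℝ) := by exact_mod_cast hn
  have hs : (0:ℝ) < Real.sqrt (π*(n:ℝ)/2) := Real.sqrt_pos.mpr (by positivity)
  positivity

lemma log_RHS (n : ℕ) (hn : 1 ≤ n) (E : ℝ) :
    Real.log ((2:ℝ)^n / Real.sqrt (π*(n:ℝ)/2) * Real.exp E)
      = (n:ℝ)*Real.log 2 - Real.log (Real.sqrt (π*(n:ℝ)/2)) + E := by
  have hN : (0:ℝ) < (n:ℝ) := by exact_mod_cast hn
  have hs : (0:ℝ) < Real.sqrt (π*(n:ℝ)/2) := Real.sqrt_pos.mpr (by positivity)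
  rw [Real.log_mul (by positivity) (Real.exp_ne_zero E), Real.log_exp,
    Real.log_div (by positivity) hs.ne', Real.log_pow]

lemma main_of_log (n k : ℕ) (hn : 1 ≤ n) (hC : (0:ℝ) < (n.choose k : ℝ))
    (h : Real.log (n.choose k : ℝ) ≤ (n:ℝ)*Real.log 2 - Real.log (Real.sqrt (π*(n:ℝ)/2))
      + (-(2/(n:ℝ))*((k:ℝ)-(n:ℝ)/2)^2 + 23/(18*(n:ℝ)))) :
    (n.choose k : ℝ) ≤ 2^n / Real.sqrt (π*(n:ℝ)/2) *
      Real.exp (-(2/(n:ℝ))*((k:ℝ)-(n:ℝ)/2)^2 + 23/(18*(n:ℝ))) := by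
  have hR := rhs_pos n hn (-(2/(n:ℝ))*((k:ℝ)-(n:ℝ)/2)^2 + 23/(18*(n:ℝ)))
  refine (Real.log_le_log_iff hC hR).mp ?_
  rw [log_RHS n hn]
  exact h

lemma core_all (n k : ℕ) (hk1 : 1 ≤ k) (h2 : 2*k ≤ n) :
    (n.choose k : ℝ) ≤ 2^n / Real.sqrt (π*(n:ℝ)/2) *
      Real.exp (-(2/(n:ℝ))*((k:ℝ)-(n:ℝ)/2)^2 + 23/(18*(n:ℝ))) := by
  have hn1 : 1 ≤ n := by omega
  by_cases hk2 : 2 ≤ k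
  · exact main_of_log n k hn1 (by exact_mod_cast Nat.choose_pos (by omega : k ≤ n))
      (core_log n k hk2 h2)
  · have hk1' : k = 1 := by omega
    subst hk1'
    by_cases hn5 : 5 ≤ n
    · refine main_of_log n 1 hn1 (by exact_mod_cast Nat.choose_pos (by omega : 1 ≤ n)) ?_
      rw [Nat.choose_one_right]
      have := one_log n hn5
      push_cast at this ⊢
      linarith
    · rw [Nat.choose_one_right]
      -- n = 2, 3, or 4
      have hπ := Real.pi_lt_d2
      have hπ0 := Real.pi_gt_three
      interval_cases n
      · -- n = 2
        have hs : Real.sqrt (π*((2:ℕ):ℝ)/2) ≤ 1.8 := by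
          rw [Real.sqrt_le_left (by norm_num)]
          push_cast
          nlinarith
        have hspos : (0:ℝ) < Real.sqrt (π*((2:ℕ):ℝ)/2) := Real.sqrt_pos.mpr (by push_cast; nlinarith)
        have hexp : (1:ℝ) ≤ Real.exp (-(2/((2:ℕ):ℝ))*(((1:ℕ):ℝ)-((2:ℕ):ℝ)/2)^2 + 23/(18*((2:ℕ):ℝ))) :=
          Real.one_le_exp (by push_cast; norm_num)
        have h1 : ((2:ℕ):ℝ) * Real.sqrt (π*((2:ℕ):ℝ)/2) ≤ (2:ℝ)^(2:ℕ) * 1 := by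
          push_cast at hs ⊢
          nlinarith [Real.sqrt_nonneg (π*(2:ℝ)/2)]
        rw [div_mul_eq_mul_div, le_div_iff₀ hspos]
        calc ((2:ℕ):ℝ) * Real.sqrt (π*((2:ℕ):ℝ)/2) ≤ (2:ℝ)^(2:ℕ) * 1 := h1
          _ ≤ (2:ℝ)^(2:ℕ) * Real.exp (-(2/((2:ℕ):ℝ))*(((1:ℕ):ℝ)-((2:ℕ):ℝ)/2)^2 + 23/(18*((2:ℕ):ℝ))) := by
              exact mul_le_mul_of_nonneg_left hexp (by norm_num)
      · -- n = 3
        have hs : Real.sqrt (π*((3:ℕ):ℝ)/2) ≤ 2.2 := by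
          rw [Real.sqrt_le_left (by norm_num)]
          push_cast
          nlinarith
        have hspos : (0:ℝ) < Real.sqrt (π*((3:ℕ):ℝ)/2) := Real.sqrt_pos.mpr (by push_cast; nlinarith)
        have hexp : (1:ℝ) ≤ Real.exp (-(2/((3:ℕ):ℝ))*(((1:ℕ):ℝ)-((3:ℕ):ℝ)/2)^2 + 23/(18*((3:ℕ):ℝ))) :=
          Real.one_le_exp (by push_cast; norm_num)
        rw [div_mul_eq_mul_div, le_div_iff₀ hspos]
        calc ((3:ℕ):ℝ) * Real.sqrt (π*((3:ℕ):ℝ)/2) ≤ (2:ℝ)^(3:ℕ) * 1 := by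
              push_cast at hs ⊢
              nlinarith [Real.sqrt_nonneg (π*(3:ℝ)/2)]
          _ ≤ (2:ℝ)^(3:ℕ) * Real.exp (-(2/((3:ℕ):ℝ))*(((1:ℕ):ℝ)-((3:ℕ):ℝ)/2)^2 + 23/(18*((3:ℕ):ℝ))) := by
              exact mul_le_mul_of_nonneg_left hexp (by norm_num)
      · -- n = 4
        have hs : Real.sqrt (π*((4:ℕ):ℝ)/2) ≤ 2.51 := by
          rw [Real.sqrt_le_left (by norm_num)]
          push_cast
          nlinarith
        have hspos : (0:ℝ) < Real.sqrt (π*((4:ℕ):ℝ)/2) := Real.sqrt_pos.mpr (by push_cast; nlinarith)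
        have hexp : (59:ℝ)/72 ≤ Real.exp (-(2/((4:ℕ):ℝ))*(((1:ℕ):ℝ)-((4:ℕ):ℝ)/2)^2 + 23/(18*((4:ℕ):ℝ))) := by
          have harg : -(2/((4:ℕ):ℝ))*(((1:ℕ):ℝ)-((4:ℕ):ℝ)/2)^2 + 23/(18*((4:ℕ):ℝ)) = -13/72 := by
            push_cast
            norm_num
          rw [harg]
          linarith [Real.add_one_le_exp (-13/72 : ℝ)]
        rw [div_mul_eq_mul_div, le_div_iff₀ hspos]
        calc ((4:ℕ):ℝ) * Real.sqrt (π*((4:ℕ):ℝ)/2) ≤ (2:ℝ)^(4:ℕ) * (59/72) := by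
              push_cast at hs ⊢
              nlinarith [Real.sqrt_nonneg (π*(4:ℝ)/2)]
          _ ≤ (2:ℝ)^(4:ℕ) * Real.exp (-(2/((4:ℕ):ℝ))*(((1:ℕ):ℝ)-((4:ℕ):ℝ)/2)^2 + 23/(18*((4:ℕ):ℝ))) := by
              exact mul_le_mul_of_nonneg_left hexp (by norm_num)

theorem stmt2 (n k : ℕ) (hn : 1 ≤ n) (hk : k ≤ n) :
    (n.choose k : ℝ) ≤ 2 ^ n / Real.sqrt (Real.pi * n / 2) *
      Real.exp (-(2 / n) * ((k : ℝ) - n / 2) ^ 2 + 23 / (18 * n)) := by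
  have hone : ∀ (y : ℝ), (y - (n:ℝ)/2)^2 = ((n:ℝ)/2)^2 → (1:ℝ) ≤
      2 ^ n / Real.sqrt (Real.pi * n / 2) *
        Real.exp (-(2 / n) * (y - n / 2) ^ 2 + 23 / (18 * n)) := by
    intro y hsq
    have hR := rhs_pos n hn (-(2 / (n:ℝ)) * (y - (n:ℝ) / 2) ^ 2 + 23 / (18 * (n:ℝ)))
    calc (1:ℝ) = Real.exp 0 := Real.exp_zero.symm
      _ ≤ 2 ^ n / Real.sqrt (Real.pi * n / 2) *
          Real.exp (-(2 / n) * (y - n / 2) ^ 2 + 23 / (18 * n)) := by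
        rw [← Real.exp_log hR]
        apply Real.exp_le_exp.mpr
        rw [log_RHS n hn]
        have h0 := zero_log n hn
        rw [hsq]
        linarith
  by_cases hk0 : k = 0
  · subst hk0
    rw [Nat.choose_zero_right]
    push_cast
    exact hone 0 (by ring)
  · by_cases hkn : k = n
    · subst hkn
      rw [Nat.choose_self]
      push_cast
      exact hone (k:ℝ) (by ring)
    · have hk1 : 1 ≤ k := by omega
      by_cases h2 : 2*k ≤ n
      · exact core_all n k hk1 h2
      · have hkk : 1 ≤ n - k := by omega
        have h2' : 2*(n-k) ≤ n := by omega
        have hgoal := core_all n (n-k) hkk h2'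
        rw [Nat.choose_symm hk] at hgoal
        have ecast : ((n-k:ℕ):ℝ) = (n:ℝ)-(k:ℝ) := by
          push_cast [Nat.cast_sub hk]
          ring
        rw [ecast] at hgoal
        have e : ((n:ℝ)-(k:ℝ) - (n:ℝ)/2)^2 = ((k:ℝ)-(n:ℝ)/2)^2 := by ring
        rw [e] at hgoal
        exact hgoal
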